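/- Let n ≥ m ≥ k ≥ 1, let g be a tuple of m independent commuting self-adjoint elements of the n-qubit Pauli group, and let L ∈ F_2^{k×m} have full rank. Define the k-tuple Lg whose i-th entry is ∏_{j=1}^m g_j^{L_{ij}}. Then for all y ∈ F_2^k, P(Lg, y) = ∑_{x ∈ F_2^m : Lx = y} P(g, x), where P(·,·) denotes the joint eigenspace projections. -/

import Mathlib

open Matrix

/-- The Pauli matrix `σ₁^u σ₃^v` on `n` qubits, written in the computational basis
indexed by `F_2^n`. -/
noncomputable def PauliMat (n : ℕ) (u v : Fin n → ZMod 2) :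
    Matrix (Fin n → ZMod 2) (Fin n → ZMod 2) ℂ :=
  fun z' z => if z' = z + u then (-1 : ℂ) ^ (v ⬝ᵥ z).val else 0

/-- The joint eigenspace projection `P(g,x) = 2^{−m} ∏_{j=1}^m (I + (−1)^{x_j} g_j)`. -/
noncomputable def pauliProj (n m : ℕ)
    (g : Fin m → Matrix (Fin n → ZMod 2) (Fin n → ZMod 2) ℂ) (x : Fin m → ZMod 2) :
    Matrix (Fin n → ZMod 2) (Fin n → ZMod 2) ℂ :=
  ((2 : ℂ) ^ (-(m : ℤ))) •
    (List.ofFn (fun j : Fin m =>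
      (1 : Matrix (Fin n → ZMod 2) (Fin n → ZMod 2) ℂ) + ((-1 : ℂ) ^ ((x j).val)) • g j)).prod

noncomputable def eps (c : ZMod 2) : ℂ := (-1) ^ c.val

lemma zmod2_cases : ∀ c : ZMod 2, c = 0 ∨ c = 1 := by decide

lemma zmod2_val11 : ZMod.val ((1:ZMod 2) + 1) = 0 := by decide

lemma eps_zero : eps 0 = 1 := by simp [eps]

lemma eps_one : eps 1 = -1 := by
  simp only [eps, ZMod.val_one, pow_one]

lemma eps_add (a b : ZMod 2) : eps (a + b) = eps a * eps b := by
  rcases zmod2_cases a with rfl | rfl <;> rcases zmod2_cases b with rfl | rfl <;>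
    simp only [eps, zmod2_val11, add_zero, zero_add, ZMod.val_one, ZMod.val_zero,
      pow_zero, pow_one] <;> norm_num

lemma eps_sq (a : ZMod 2) : eps a * eps a = 1 := by
  rcases zmod2_cases a with rfl | rfl <;>
    simp only [eps, ZMod.val_one, ZMod.val_zero, pow_zero, pow_one] <;> norm_num

lemma one_add_eps (c : ZMod 2) : (1 : ℂ) + eps c = if c = 0 then 2 else 0 := by
  rcases zmod2_cases c with rfl | rfl <;>
    simp only [eps, ZMod.val_one, ZMod.val_zero, pow_zero, pow_one] <;> norm_num

lemma zmod2_add_self : ∀ a : ZMod 2, a + a = 0 := by decide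

lemma zmod2_add_eq_zero : ∀ a b : ZMod 2, (a + b = 0 ↔ b = a) := by decide

lemma star_neg_one_pow (a : ℕ) : star ((-1 : ℂ) ^ a) = (-1 : ℂ) ^ a := by
  rw [star_pow, star_neg, star_one]

lemma pauli_unitary (n : ℕ) (u v : Fin n → ZMod 2) :
    (PauliMat n u v)ᴴ * PauliMat n u v = 1 := by
  ext z' z
  simp only [Matrix.mul_apply, Matrix.conjTranspose_apply, PauliMat, Matrix.one_apply]
  rw [Finset.sum_eq_single (z' + u)]
  · have h1 : z' + u = z + u ↔ z' = z := add_left_inj u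
    by_cases h : z' = z
    · subst h
      simp [star_neg_one_pow, ← pow_add, h1]
    · simp [h1, h]
  · intro w _ hw
    simp [hw]
  · intro h; exact absurd (Finset.mem_univ _) h

theorem key {A : Type*} [Ring A] [Algebra ℂ A] (m k : ℕ) (g : Fin m → A)
    (hg2 : ∀ j, g j * g j = 1)
    (hcomm : ∀ i j, g i * g j = g j * g i)
    (L : Matrix (Fin k) (Fin m) (ZMod 2)) (y : Fin k → ZMod 2) :
    ((2:ℂ) ^ (-(k:ℤ))) • (List.ofFn (fun i : Fin k =>
        (1:A) + eps (y i) • (List.ofFn (fun j : Fin m => g j ^ (L i j).val)).prod)).prod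
      = ∑ x ∈ Finset.univ.filter (fun x : Fin m → ZMod 2 => L.mulVec x = y),
          ((2:ℂ) ^ (-(m:ℤ))) •
            (List.ofFn (fun j : Fin m => (1:A) + eps (x j) • g j)).prod := by
  classical
  have hcs : ∀ a ∈ Set.range g, ∀ b ∈ Set.range g, a * b = b * a := by
    rintro _ ⟨i, rfl⟩ _ ⟨j, rfl⟩; exact hcomm i j
  letI inst : CommRing (Algebra.adjoin ℂ (Set.range g)) := Algebra.adjoinCommRingOfComm ℂ hcs
  let G : Fin m → Algebra.adjoin ℂ (Set.range g) := fun j => ⟨g j, Algebra.subset_adjoin ⟨j, rfl⟩⟩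
  have hG2 : ∀ j, G j * G j = 1 := by
    intro j; apply Subtype.ext; show g j * g j = 1; exact hg2 j
  let Q : (Fin m → ZMod 2) → Algebra.adjoin ℂ (Set.range g) :=
    fun x => ∏ j, (1 + eps (x j) • G j)
  let LG : Fin k → Algebra.adjoin ℂ (Set.range g) := fun i => ∏ j, G j ^ (L i j).val
  let QL : Algebra.adjoin ℂ (Set.range g) := ∏ i, (1 + eps (y i) • LG i)
  -- sum over all x of Q x
  have hQsum : ∑ x : Fin m → ZMod 2, Q x = ((2:ℂ) ^ m) • 1 := by
    rw [← Fintype.prod_sum (fun (j : Fin m) (c : ZMod 2) => 1 + eps c • G j)]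
    have h2 : ∀ j : Fin m, (∑ c : ZMod 2, ((1 : Algebra.adjoin ℂ (Set.range g)) + eps c • G j))
        = (2:ℂ) • 1 := by
      intro j
      have hu : (Finset.univ : Finset (ZMod 2)) = {0, 1} := by decide
      rw [hu, Finset.sum_insert (by decide), Finset.sum_singleton, eps_zero, eps_one,
        one_smul, neg_smul, one_smul, two_smul]
      abel
    rw [Finset.prod_congr rfl (fun j _ => h2 j), Finset.prod_const, Finset.card_univ,
      Fintype.card_fin, smul_pow, one_pow]
  -- G j acts on Q x by eps (x j)
  have hGact : ∀ (j : Fin m) (x : Fin m → ZMod 2), G j * Q x = eps (x j) • Q x := by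
    intro j x
    have hkey : G j * (1 + eps (x j) • G j) = eps (x j) • (1 + eps (x j) • G j) := by
      rw [mul_add, mul_one, mul_smul_comm, hG2 j, smul_add, smul_smul, eps_sq, one_smul]
      abel
    have hQx : Q x = (1 + eps (x j) • G j) *
        ∏ j' ∈ Finset.univ.erase j, (1 + eps (x j') • G j') :=
      (Finset.mul_prod_erase Finset.univ _ (Finset.mem_univ j)).symm
    rw [hQx, ← mul_assoc, hkey, smul_mul_assoc]
  -- products of G's act on Q x
  have hPowAct : ∀ (e : Fin m → ZMod 2) (x : Fin m → ZMod 2),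
      (∏ j, G j ^ (e j).val) * Q x = eps (e ⬝ᵥ x) • Q x := by
    intro e x
    have hgen : ∀ s : Finset (Fin m),
        (∏ j ∈ s, G j ^ (e j).val) * Q x = eps (∑ j ∈ s, e j * x j) • Q x := by
      intro s
      induction s using Finset.induction_on with
      | empty => simp [eps_zero]
      | @insert a s ha ih =>
        have hfac : G a ^ (e a).val * Q x = eps (e a * x a) • Q x := by
          rcases zmod2_cases (e a) with h | h <;> rw [h]
          · rw [ZMod.val_zero, pow_zero, one_mul, zero_mul, eps_zero, one_smul]
          · rw [ZMod.val_one, pow_one, hGact a x, one_mul]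
        rw [Finset.prod_insert ha, Finset.sum_insert ha, mul_assoc, ih, mul_smul_comm, hfac,
          smul_smul, eps_add, mul_comm]
    rw [hgen Finset.univ]
    rfl
  have hLGact : ∀ (i : Fin k) (x : Fin m → ZMod 2),
      LG i * Q x = eps (L.mulVec x i) • Q x := fun i x => hPowAct (fun j => L i j) x
  -- action of QL
  have hQLact : ∀ x : Fin m → ZMod 2,
      QL * Q x = (if L.mulVec x = y then (2:ℂ)^k else 0) • Q x := by
    intro x
    have hgen : ∀ s : Finset (Fin k),
        (∏ i ∈ s, (1 + eps (y i) • LG i)) * Q x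
          = (∏ i ∈ s, ((1:ℂ) + eps (y i + L.mulVec x i))) • Q x := by
      intro s
      induction s using Finset.induction_on with
      | empty => simp
      | @insert a s ha ih =>
        have hfac : (1 + eps (y a) • LG a) * Q x = (1 + eps (y a + L.mulVec x a)) • Q x := by
          rw [add_mul, one_mul, smul_mul_assoc, hLGact a x, smul_smul, ← eps_add, add_smul,
            one_smul]
        rw [Finset.prod_insert ha, Finset.prod_insert ha, mul_assoc, ih, mul_smul_comm, hfac,
          smul_smul, mul_comm]
    have hsc : (∏ i, ((1:ℂ) + eps (y i + L.mulVec x i)))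
        = if L.mulVec x = y then (2:ℂ)^k else 0 := by
      by_cases h : L.mulVec x = y
      · rw [if_pos h]
        have : ∀ i, (1:ℂ) + eps (y i + L.mulVec x i) = 2 := by
          intro i
          rw [h, zmod2_add_self, eps_zero]; norm_num
        rw [Finset.prod_congr rfl (fun i _ => this i), Finset.prod_const, Finset.card_univ,
          Fintype.card_fin]
      · rw [if_neg h]
        obtain ⟨i, hi⟩ : ∃ i, L.mulVec x i ≠ y i := by
          by_contra hc
          push_neg at hc
          exact h (funext hc)
        refine Finset.prod_eq_zero (Finset.mem_univ i) ?_
        rw [one_add_eps, if_neg]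
        intro hz
        exact hi ((zmod2_add_eq_zero _ _).mp hz)
    rw [show QL = _ from rfl, hgen Finset.univ, hsc]
  -- main identity in the commutative subalgebra
  have hmain : ((2:ℂ)^m) • QL = ((2:ℂ)^k) •
      ∑ x ∈ Finset.univ.filter (fun x : Fin m → ZMod 2 => L.mulVec x = y), Q x := by
    calc ((2:ℂ)^m) • QL = QL * (((2:ℂ)^m) • 1) := by rw [mul_smul_comm, mul_one]
      _ = QL * ∑ x : Fin m → ZMod 2, Q x := by rw [hQsum]
      _ = ∑ x : Fin m → ZMod 2, QL * Q x := Finset.mul_sum _ _ _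
      _ = ∑ x : Fin m → ZMod 2, (if L.mulVec x = y then (2:ℂ)^k else 0) • Q x :=
          Finset.sum_congr rfl (fun x _ => hQLact x)
      _ = ∑ x ∈ Finset.univ.filter (fun x : Fin m → ZMod 2 => L.mulVec x = y),
            ((2:ℂ)^k) • Q x := by
          rw [Finset.sum_filter]
          refine Finset.sum_congr rfl (fun x _ => ?_)
          split <;> simp
      _ = ((2:ℂ)^k) • ∑ x ∈ Finset.univ.filter
            (fun x : Fin m → ZMod 2 => L.mulVec x = y), Q x := (Finset.smul_sum).symm
  -- coercions back to A
  let V := (Algebra.adjoin ℂ (Set.range g)).val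
  have hQcoe : ∀ x : Fin m → ZMod 2,
      (List.ofFn (fun j : Fin m => (1:A) + eps (x j) • g j)).prod = V (Q x) := by
    intro x
    have h1 : Q x = (List.ofFn (fun j : Fin m =>
        (1 : Algebra.adjoin ℂ (Set.range g)) + eps (x j) • G j)).prod := List.prod_ofFn.symm
    rw [h1, map_list_prod V, List.map_ofFn]
    rfl
  have hLGcoe : ∀ i : Fin k,
      (List.ofFn (fun j : Fin m => g j ^ (L i j).val)).prod = V (LG i) := by
    intro i
    have h1 : LG i = (List.ofFn (fun j : Fin m => G j ^ (L i j).val)).prod :=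
      List.prod_ofFn.symm
    rw [h1, map_list_prod V, List.map_ofFn]
    rfl
  have hQLcoe : (List.ofFn (fun i : Fin k => (1:A) + eps (y i) •
      (List.ofFn (fun j : Fin m => g j ^ (L i j).val)).prod)).prod = V QL := by
    have h1 : QL = (List.ofFn (fun i : Fin k =>
        (1 : Algebra.adjoin ℂ (Set.range g)) + eps (y i) • LG i)).prod := List.prod_ofFn.symm
    have h2 : (fun i : Fin k => (1:A) + eps (y i) •
        (List.ofFn (fun j : Fin m => g j ^ (L i j).val)).prod)
        = fun i : Fin k => V (1 + eps (y i) • LG i) := by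
      funext i
      rw [hLGcoe i, map_add, _root_.map_one, _root_.map_smul]
    rw [show (List.ofFn (fun i : Fin k => (1:A) + eps (y i) •
        (List.ofFn (fun j : Fin m => g j ^ (L i j).val)).prod))
        = List.ofFn (fun i : Fin k => V (1 + eps (y i) • LG i)) from congrArg List.ofFn h2,
      h1, map_list_prod V, List.map_ofFn]
    rfl
  -- push hmain along V
  have hmainA : ((2:ℂ)^m) • V QL = ((2:ℂ)^k) • ∑ x ∈ Finset.univ.filter
      (fun x : Fin m → ZMod 2 => L.mulVec x = y), V (Q x) := by
    rw [← map_sum, ← _root_.map_smul, ← _root_.map_smul, hmain]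
  -- scalar arithmetic and conclusion
  have hinv : ∀ a : ℕ, (2:ℂ)^(-(a:ℤ)) * (2:ℂ)^a = 1 := by
    intro a
    rw [← zpow_natCast (2:ℂ) a, ← zpow_add₀ (two_ne_zero)]
    norm_num
  rw [hQLcoe]
  have hR : ∑ x ∈ Finset.univ.filter (fun x : Fin m → ZMod 2 => L.mulVec x = y),
      ((2:ℂ) ^ (-(m:ℤ))) • (List.ofFn (fun j : Fin m => (1:A) + eps (x j) • g j)).prod
      = ((2:ℂ) ^ (-(m:ℤ))) • ∑ x ∈ Finset.univ.filter
          (fun x : Fin m → ZMod 2 => L.mulVec x = y), V (Q x) := by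
    rw [Finset.smul_sum]
    exact Finset.sum_congr rfl (fun x _ => by rw [hQcoe x])
  rw [hR]
  have hVQL : V QL = ((2:ℂ)^(-(m:ℤ)) * (2:ℂ)^k) • ∑ x ∈ Finset.univ.filter
      (fun x : Fin m → ZMod 2 => L.mulVec x = y), V (Q x) := by
    have := congrArg (fun z => ((2:ℂ)^(-(m:ℤ))) • z) hmainA
    simp only [smul_smul] at this
    rwa [hinv m, one_smul] at this
  rw [hVQL, smul_smul]
  congr 1
  rw [mul_comm ((2:ℂ)^(-(m:ℤ))) ((2:ℂ)^k), ← mul_assoc, hinv k, one_mul]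

/-- Let `n ≥ m ≥ k ≥ 1`, let `g` be a tuple of `m` independent commuting
self-adjoint elements of the `n`-qubit Pauli group, and let `L ∈ F_2^{k×m}` have full
rank.  With `(Lg)_i = ∏_{j=1}^m g_j^{L_{ij}}`, for all `y ∈ F_2^k`:
`P(Lg, y) = ∑_{x ∈ F_2^m : Lx = y} P(g, x)`. -/
theorem stmt11 (n m k : ℕ) (hk : 1 ≤ k) (hkm : k ≤ m) (hmn : m ≤ n)
    (uu vv : Fin m → (Fin n → ZMod 2)) (ω : Fin m → ℂ)
    (hω : ∀ j, ω j ∈ ({1, -1, Complex.I, -Complex.I} : Set ℂ))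
    (g : Fin m → Matrix (Fin n → ZMod 2) (Fin n → ZMod 2) ℂ)
    (hg : ∀ j, g j = ω j • PauliMat n (uu j) (vv j))
    (hsa : ∀ j, (g j)ᴴ = g j)
    (hcomm : ∀ i j, g i * g j = g j * g i)
    (hind : LinearIndependent (ZMod 2)
      (fun j : Fin m => ((uu j, vv j) : (Fin n → ZMod 2) × (Fin n → ZMod 2))))
    (L : Matrix (Fin k) (Fin m) (ZMod 2)) (hL : L.rank = k)
    (y : Fin k → ZMod 2) :
    pauliProj n k
        (fun i : Fin k => (List.ofFn (fun j : Fin m => g j ^ (L i j).val)).prod) y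
      = ∑ x ∈ Finset.univ.filter (fun x : Fin m → ZMod 2 => L.mulVec x = y),
          pauliProj n m g x := by
  have hg2 : ∀ j, g j * g j = 1 := by
    intro j
    have hst : star (ω j) * ω j = 1 := by
      have h := hω j
      simp only [Set.mem_insert_iff, Set.mem_singleton_iff] at h
      rcases h with h | h | h | h <;> rw [h] <;>
        simp [Complex.star_def, Complex.conj_I, Complex.I_mul_I]
    calc g j * g j = (g j)ᴴ * g j := by rw [hsa j]
      _ = 1 := by
          rw [hg j, Matrix.conjTranspose_smul, Matrix.smul_mul, Matrix.mul_smul, smul_smul,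
            pauli_unitary, hst, one_smul]
  have hkey := key (A := Matrix (Fin n → ZMod 2) (Fin n → ZMod 2) ℂ) m k g hg2 hcomm L y
  unfold pauliProj
  simpa only [eps] using hkey
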